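/- Let P be a naturally labeled partial order on {1,2,…,m} and let π ∈ L(P). Then for every i and every x ∈ DB_i(π), we have mc(x) ≤ i; consequently DB_i(π) ⊆ C_1 ∪ C_2 ∪ ⋯ ∪ C_i, where C_j = {y : mc(y) = j}. -/

import Mathlib

open Finset Polynomial LaurentPolynomial

attribute [local instance] Classical.propDecidable

/-- The value `π_i` of the word of `π` at the 1-based position `i` (values in `{1, …, m}`). -/
def wordAt (m : ℕ) (π : Equiv.Perm (Fin m)) (i : ℕ) : ℕ :=
  if h : i - 1 < m then ((π ⟨i - 1, h⟩ : Fin m) : ℕ) + 1 else 0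

/-- The descent set `Des(π) ⊆ {1, …, m-1}` (1-based positions). -/
def DesSet (m : ℕ) (π : Equiv.Perm (Fin m)) : Finset ℕ :=
  (Finset.Ico 1 m).filter fun i => wordAt m π (i + 1) < wordAt m π i

/-- The number of descents `des(π)`. -/
def desNum (m : ℕ) (π : Equiv.Perm (Fin m)) : ℕ := (DesSet m π).card

/-- The major index `maj(π)`. -/
def majIdx (m : ℕ) (π : Equiv.Perm (Fin m)) : ℕ := ∑ i ∈ DesSet m π, i

/-- The partial order `P` on `{1,…,m}` (encoded as `Fin m`) is naturally labeled:
`x ≤_P y` implies `x ≤ y` as integers. -/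
def NatLabeled (m : ℕ) (P : PartialOrder (Fin m)) : Prop :=
  ∀ x y : Fin m, P.le x y → x ≤ y

/-- `π` is a linear extension of `P`: `π_i ≤_P π_j` implies `i ≤ j`. -/
def IsLinExt (m : ℕ) (P : PartialOrder (Fin m)) (π : Equiv.Perm (Fin m)) : Prop :=
  ∀ i j : Fin m, P.le (π i) (π j) → i ≤ j

/-- `mc(x)`: the maximum number of elements of a chain of `P` whose largest element is `x`. -/
noncomputable def mc (m : ℕ) (P : PartialOrder (Fin m)) (x : Fin m) : ℕ :=
  sSup {k : ℕ | ∃ s : Finset (Fin m),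
    s.card = k ∧ IsChain P.le ↑s ∧ x ∈ s ∧ ∀ y ∈ s, P.le y x}

/-- `m̄c(x)`: the maximum number of elements of a chain of `P` whose smallest element is `x`. -/
noncomputable def mcUp (m : ℕ) (P : PartialOrder (Fin m)) (x : Fin m) : ℕ :=
  sSup {k : ℕ | ∃ s : Finset (Fin m),
    s.card = k ∧ IsChain P.le ↑s ∧ x ∈ s ∧ ∀ y ∈ s, P.le x y}

/-- The `q`-integer `[n]_q` for `n ∈ ℤ`, as a Laurent polynomial:
`[n]_q = 1 + q + ⋯ + q^{n-1}` for `n ≥ 0` and `[-n]_q = -q^{-n} [n]_q`. -/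
noncomputable def qInt (n : ℤ) : LaurentPolynomial ℤ :=
  if 0 ≤ n then ∑ i ∈ Finset.range n.toNat, T (i : ℤ)
  else -(T n * ∑ i ∈ Finset.range (-n).toNat, T (i : ℤ))

/-- The polynomial `F_P(q,x) = Σ_{π ∈ L(P)} q^{maj π} Π_{i=1}^m ([i - des π]_q + q^{i - des π} x)`,
an element of `(ℤ[q,q⁻¹])[x]` (it in fact lies in `ℤ[q,x]`). -/
noncomputable def Fpoly (m : ℕ) (P : PartialOrder (Fin m)) : Polynomial (LaurentPolynomial ℤ) :=
  ∑ π ∈ Finset.univ.filter (fun π => IsLinExt m P π),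
    Polynomial.C (T (majIdx m π : ℤ)) *
      ∏ i ∈ Finset.Icc 1 m,
        (Polynomial.C (qInt ((i : ℤ) - desNum m π)) +
          Polynomial.C (T ((i : ℤ) - desNum m π)) * Polynomial.X)

/-- The Newton polygon of an element of `(ℤ[q,q⁻¹])[x]`, in the `(q,x)`-plane. -/
noncomputable def NTL (f : Polynomial (LaurentPolynomial ℤ)) : Set (ℝ × ℝ) :=
  convexHull ℝ {p : ℝ × ℝ | ∃ (i : ℤ) (k : ℕ), (AddMonoidAlgebra.coeff (f.coeff k)) i ≠ 0 ∧ p = ((i : ℝ), (k : ℝ))}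

/-- The Newton polygon of an element of `ℤ[q][x]`, in the `(q,x)`-plane. -/
noncomputable def NTP (f : Polynomial (Polynomial ℤ)) : Set (ℝ × ℝ) :=
  convexHull ℝ {p : ℝ × ℝ | ∃ (i k : ℕ), (f.coeff k).coeff i ≠ 0 ∧ p = ((i : ℝ), (k : ℝ))}

/-- The polygon `C(a_1,…,a_m;h)`: the convex hull of `(0,0)`, `(a_1+⋯+a_i, i)` for
`1 ≤ i ≤ m`, `(h,m)` and `(h-m,0)`. -/
noncomputable def Cpolygon (m : ℕ) (a : ℕ → ℕ) (h : ℕ) : Set (ℝ × ℝ) :=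
  convexHull ℝ ({((0 : ℝ), (0 : ℝ)), ((h : ℝ), (m : ℝ)), ((h : ℝ) - (m : ℝ), (0 : ℝ))} ∪
    {p : ℝ × ℝ | ∃ i ∈ Finset.Icc 1 m, p = ((∑ j ∈ Finset.Icc 1 i, (a j : ℝ)), (i : ℝ))})

/-- The index of the descent block of `π` containing the 1-based position `j`. -/
def blockIdx (m : ℕ) (π : Equiv.Perm (Fin m)) (j : ℕ) : ℕ :=
  1 + ((Finset.Ico 1 j).filter (fun i => i ∉ DesSet m π)).card

/-- `DB_i(π)`: the set of entries of the `i`-th descent block of `π`. -/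
def DB (m : ℕ) (π : Equiv.Perm (Fin m)) (i : ℕ) : Finset (Fin m) :=
  Finset.univ.filter fun x => blockIdx m π (((π.symm x : Fin m) : ℕ) + 1) = i

/-- `PP(P,n)`: the set of `P`-partitions (order-reversing maps) with all parts at most `n`,
encoded as functions `Fin m → Fin (n+1)`. -/
noncomputable def PPset (m : ℕ) (P : PartialOrder (Fin m)) (n : ℕ) :
    Finset (Fin m → Fin (n + 1)) :=
  Finset.univ.filter fun σ => ∀ x y : Fin m, P.le x y → σ y ≤ σ x

/-- `|σ| = σ(1) + ⋯ + σ(m)`. -/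
def sizePP (m n : ℕ) (σ : Fin m → Fin (n + 1)) : ℕ := ∑ i : Fin m, (σ i : ℕ)

/-- The `q`-integer `[n]_q` for `n ∈ ℕ`, as an ordinary polynomial in `q`. -/
noncomputable def qIntP (n : ℕ) : Polynomial ℤ := ∑ i ∈ Finset.range n, Polynomial.X ^ i

/-- The `q`-factorial `[n]_q!`. -/
noncomputable def qFact (n : ℕ) : Polynomial ℤ := ∏ i ∈ Finset.Icc 1 n, qIntP i

/-- The dual poset `P̄` : `x ≤_{P̄} y` iff `y ≤_P x`. -/
def dualP (m : ℕ) (P : PartialOrder (Fin m)) : PartialOrder (Fin m) where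
  le x y := P.le y x
  lt x y := P.lt y x
  le_refl x := P.le_refl x
  le_trans a b c h1 h2 := P.le_trans c b a h2 h1
  le_antisymm a b h1 h2 := P.le_antisymm a b h2 h1
  lt_iff_le_not_ge a b := P.lt_iff_le_not_ge b a

/-- The canonical ring map `ℤ[q] → ℚ(q)`. -/
noncomputable def toRF : Polynomial ℤ →+* RatFunc ℚ :=
  (algebraMap (Polynomial ℚ) (RatFunc ℚ)).comp (Polynomial.mapRingHom (Int.castRingHom ℚ))

/-- `W(n·O(P), q) = Σ_σ q^{|σ|}`, the sum being over all order-preserving maps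
`σ : P → {0,…,n}`. -/
noncomputable def Wpoly (m : ℕ) (P : PartialOrder (Fin m)) (n : ℕ) : Polynomial ℤ :=
  ∑ σ ∈ (Finset.univ.filter fun σ : Fin m → Fin (n + 1) =>
      ∀ x y : Fin m, P.le x y → σ x ≤ σ y),
    Polynomial.X ^ (∑ i : Fin m, (σ i : ℕ))

/-- The polynomial `q^{mj - s(s-1)/2} Π_{i=1}^{s-1} (x - [i]_q) Π_{i=1}^{m-s} (q^i x + [i]_q)`. -/
noncomputable def tSummand (m s mj : ℕ) : Polynomial (LaurentPolynomial ℤ) :=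
  Polynomial.C (T ((mj : ℤ) - (s * (s - 1) / 2 : ℕ))) *
    (∏ i ∈ Finset.Icc 1 (s - 1), (Polynomial.X - Polynomial.C (qInt (i : ℤ)))) *
    ∏ i ∈ Finset.Icc 1 (m - s),
      (Polynomial.C (T (i : ℤ)) * Polynomial.X + Polynomial.C (qInt (i : ℤ)))

/-- `t(π,k)`: the coefficient of `x^{k-1}` in
`q^{maj π - s(s-1)/2} Π_{i=1}^{s-1} (x - [i]_q) Π_{i=1}^{m-s} (q^i x + [i]_q)`,
where `s = des π`. -/
noncomputable def tpoly (m : ℕ) (π : Equiv.Perm (Fin m)) (k : ℕ) : LaurentPolynomial ℤ :=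
  (tSummand m (desNum m π) (majIdx m π)).coeff (k - 1)

/-- The polynomial `A(q,x) = Π_{i=1}^m (q^i x + [i]_q)`. -/
noncomputable def Apoly (m : ℕ) : Polynomial (LaurentPolynomial ℤ) :=
  ∏ i ∈ Finset.Icc 1 m,
    (Polynomial.C (T (i : ℤ)) * Polynomial.X + Polynomial.C (qInt (i : ℤ)))

/-- The polynomial `B(q,x) = x Σ_{π ∈ L(P), des π ≥ 1} q^{maj π - s(s-1)/2}
Π_{i=1}^{s-1} (x - [i]_q) Π_{i=1}^{m-s} (q^i x + [i]_q)`, where `s = des π`;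
one has `F_P(q,x) = A(q,x) + B(q,x)`. -/
noncomputable def Bpoly (m : ℕ) (P : PartialOrder (Fin m)) : Polynomial (LaurentPolynomial ℤ) :=
  Polynomial.X *
    ∑ π ∈ Finset.univ.filter (fun π => IsLinExt m P π ∧ 1 ≤ desNum m π),
      tSummand m (desNum m π) (majIdx m π)

lemma blockIdx_mono (m : ℕ) (π : Equiv.Perm (Fin m)) {p q : ℕ} (h : p ≤ q) :
    blockIdx m π p ≤ blockIdx m π q := by
  unfold blockIdx
  have := Finset.card_le_card
    (Finset.filter_subset_filter (fun i => i ∉ DesSet m π)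
      (Finset.Ico_subset_Ico (le_refl 1) h))
  omega

lemma descent_of_eq_blockIdx (m : ℕ) (π : Equiv.Perm (Fin m)) {p q j : ℕ}
    (hpq : p ≤ q) (heq : blockIdx m π p = blockIdx m π q)
    (h1 : 1 ≤ p) (hj1 : p ≤ j) (hj2 : j < q) : wordAt m π (j + 1) < wordAt m π j := by
  have hsub : (Finset.Ico 1 p).filter (fun i => i ∉ DesSet m π) ⊆
      (Finset.Ico 1 q).filter (fun i => i ∉ DesSet m π) :=
    Finset.filter_subset_filter _ (Finset.Ico_subset_Ico le_rfl hpq)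
  have hcard : ((Finset.Ico 1 q).filter (fun i => i ∉ DesSet m π)).card ≤
      ((Finset.Ico 1 p).filter (fun i => i ∉ DesSet m π)).card := by
    unfold blockIdx at heq; omega
  have hset := Finset.eq_of_subset_of_card_le hsub hcard
  by_contra hnd
  have hjdes : j ∉ DesSet m π := by
    intro hj
    simp only [DesSet, Finset.mem_filter] at hj
    exact hnd hj.2
  have hjmem : j ∈ (Finset.Ico 1 q).filter (fun i => i ∉ DesSet m π) := by
    simp only [Finset.mem_filter, Finset.mem_Ico]
    exact ⟨⟨le_trans h1 hj1, hj2⟩, hjdes⟩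
  rw [← hset] at hjmem
  simp only [Finset.mem_filter, Finset.mem_Ico] at hjmem
  omega

lemma word_lt_of_eq_blockIdx (m : ℕ) (π : Equiv.Perm (Fin m)) {p q : ℕ}
    (h1 : 1 ≤ p) (hpq : p < q) (heq : blockIdx m π p = blockIdx m π q) :
    wordAt m π q < wordAt m π p := by
  induction q with
  | zero => omega
  | succ q ih =>
    rcases eq_or_lt_of_le (Nat.lt_succ_iff.mp hpq) with h | h
    · subst h
      exact descent_of_eq_blockIdx m π (by omega) heq h1 le_rfl (by omega)
    · have heq' : blockIdx m π p = blockIdx m π q := by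
        have h1' := blockIdx_mono m π (le_of_lt h)
        have h2' := blockIdx_mono m π (show q ≤ q + 1 by omega)
        omega
      have := ih h heq'
      have := descent_of_eq_blockIdx m π (by omega : p ≤ q + 1) heq h1 (le_of_lt h)
        (by omega)
      omega

lemma wordAt_symm (m : ℕ) (π : Equiv.Perm (Fin m)) (y : Fin m) :
    wordAt m π ((π.symm y : ℕ) + 1) = (y : ℕ) + 1 := by
  unfold wordAt
  have h : (π.symm y : ℕ) + 1 - 1 < m := by simpa using (π.symm y).isLt
  rw [dif_pos h]
  congr 1
  have : (⟨(π.symm y : ℕ) + 1 - 1, h⟩ : Fin m) = π.symm y := by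
    apply Fin.ext; simp
  rw [this, Equiv.apply_symm_apply]

lemma blockIdx_lt_blockIdx (m : ℕ) (P : PartialOrder (Fin m)) (hnat : NatLabeled m P)
    (π : Equiv.Perm (Fin m)) (hπ : IsLinExt m P π) {y z : Fin m}
    (hle : P.le y z) (hne : y ≠ z) :
    blockIdx m π ((π.symm y : ℕ) + 1) < blockIdx m π ((π.symm z : ℕ) + 1) := by
  have hab : (π.symm y : ℕ) ≤ (π.symm z : ℕ) := by
    have h := hπ (π.symm y) (π.symm z)
      (by rw [Equiv.apply_symm_apply, Equiv.apply_symm_apply]; exact hle)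
    exact h
  have habne : (π.symm y : ℕ) ≠ (π.symm z : ℕ) :=
    Fin.val_ne_of_ne (fun h => hne (by have := congrArg π h; simpa using this))
  have hyz' : (y : ℕ) ≤ (z : ℕ) := by
    have h := hnat y z hle; exact h
  have hyzne : (y : ℕ) ≠ (z : ℕ) := Fin.val_ne_of_ne hne
  clear hle hne hnat hπ
  have hmono := blockIdx_mono m π
    (show (π.symm y : ℕ) + 1 ≤ (π.symm z : ℕ) + 1 by omega)
  rcases lt_or_eq_of_le hmono with h | h
  · exact h
  · exfalso
    have hw := word_lt_of_eq_blockIdx m π (Nat.le_add_left 1 _)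
      (by omega : (π.symm y : ℕ) + 1 < (π.symm z : ℕ) + 1) h
    rw [wordAt_symm, wordAt_symm] at hw
    omega

theorem statement19 (m : ℕ) (hm : 1 ≤ m) (P : PartialOrder (Fin m))
    (hnat : NatLabeled m P)
    (π : Equiv.Perm (Fin m)) (hπ : IsLinExt m P π) (i : ℕ) :
    (∀ x ∈ DB m π i, mc m P x ≤ i) ∧
    DB m π i ⊆ (Finset.Icc 1 i).biUnion
      (fun j => Finset.univ.filter fun y => mc m P y = j) := by
  set f : Fin m → ℕ := fun y => blockIdx m π ((π.symm y : ℕ) + 1) with hf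
  have hS : ∀ x : Fin m, 1 ∈ {k : ℕ | ∃ s : Finset (Fin m),
      s.card = k ∧ IsChain P.le ↑s ∧ x ∈ s ∧ ∀ y ∈ s, P.le y x} := by
    intro x
    refine ⟨{x}, by simp, ?_, by simp, ?_⟩
    · simp only [Finset.coe_singleton]
      exact Set.subsingleton_singleton.isChain
    · intro y hy
      simp only [Finset.mem_singleton] at hy
      exact hy ▸ P.le_refl x
  have hbdd : ∀ x : Fin m, BddAbove {k : ℕ | ∃ s : Finset (Fin m),
      s.card = k ∧ IsChain P.le ↑s ∧ x ∈ s ∧ ∀ y ∈ s, P.le y x} := by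
    intro x
    refine ⟨m, fun k hk => ?_⟩
    obtain ⟨s, hcard, -, -, -⟩ := hk
    calc k = s.card := hcard.symm
    _ ≤ (Finset.univ : Finset (Fin m)).card := Finset.card_le_univ s
    _ = m := by simp
  have key : ∀ x ∈ DB m π i, mc m P x ≤ i := by
    intro x hx
    simp only [DB, Finset.mem_filter, Finset.mem_univ, true_and] at hx
    apply csSup_le ⟨1, hS x⟩
    rintro k ⟨s, hcard, hchain, hxs, hall⟩
    have hmaps : ∀ y ∈ s, f y ∈ Finset.Icc 1 i := by
      intro y hy
      simp only [Finset.mem_Icc]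
      constructor
      · simp only [hf, blockIdx]; omega
      · rcases eq_or_ne y x with rfl | hne
        · exact le_of_eq hx
        · have := blockIdx_lt_blockIdx m P hnat π hπ (hall y hy) hne
          rw [hx] at this
          exact le_of_lt this
    have hinj : Set.InjOn f s := by
      intro y hy z hz hfyz
      by_contra hne
      have hy' : (y : Fin m) ∈ (↑s : Set (Fin m)) := hy
      have hz' : (z : Fin m) ∈ (↑s : Set (Fin m)) := hz
      rcases hchain hy' hz' hne with h | h
      · exact absurd hfyz (ne_of_lt (blockIdx_lt_blockIdx m P hnat π hπ h hne))
      · exact absurd hfyz.symm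
          (ne_of_lt (blockIdx_lt_blockIdx m P hnat π hπ h (Ne.symm hne)))
    have := Finset.card_le_card_of_injOn f hmaps hinj
    simp only [Nat.card_Icc] at this
    omega
  refine ⟨key, ?_⟩
  intro x hx
  simp only [Finset.mem_biUnion, Finset.mem_Icc, Finset.mem_filter, Finset.mem_univ, true_and]
  refine ⟨mc m P x, ⟨?_, key x hx⟩, rfl⟩
  exact le_csSup (hbdd x) (hS x)
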